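/- arXiv:2012.15457 — 2 statements merged into one kernel-verified Lean document; each statement's English description precedes it below -/
import Mathlib

section
/- Let (X,d) be a compact metric space, f_0,...,f_{m-1} continuous self-maps, φ continuous on X with M = max_{x∈X}|φ(x)|, ε>0, 0<r<1/2, and δ = sup{|φ(x)−φ(y)| : d(x,y) ≤ ε}. Then for every n ≥ 1, Q_n^s(f_0,...,f_{m-1},φ,2ε,2r) ≤ e^{nδ + 2nrM} · Q_n(f_0,...,f_{m-1},φ,ε,r). -/
open Filter Topology

section FSG

variable {X : Type*}

/-- Apply the maps of the free semigroup action along a word; the first letter of the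
list is applied first. -/
def fw {ι : Type*} (f : ι → X → X) (w : List ι) (x : X) : X :=
  w.foldl (fun y a => f a y) x

/-- The Birkhoff-type sum `(S_w φ)(x) = ∑_{w' ≤ w} φ(f_{w'} x)`. -/
noncomputable def Sw {ι : Type*} (f : ι → X → X) (φ : X → ℝ) (w : List ι) (x : X) : ℝ :=
  ∑ i ∈ Finset.range w.length, φ (fw f (w.take i) x)

variable [MetricSpace X]

/-- `F` is a `(w, ε, r)`-spanning set for the free semigroup action. -/
def rSpan {ι : Type*} (f : ι → X → X) (w : List ι) (ε r : ℝ) (F : Finset X) : Prop :=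
  ∀ x : X, ∃ y ∈ F, (1 - r) * w.length <
    (((Finset.range w.length).filter
      (fun i => dist (fw f (w.take i) x) (fw f (w.take i) y) < ε)).card : ℝ)

/-- `E` is a `(w, ε, r)`-separated set for the free semigroup action. -/
def rSep {ι : Type*} (f : ι → X → X) (w : List ι) (ε r : ℝ) (E : Finset X) : Prop :=
  ∀ x ∈ E, ∀ y ∈ E, x ≠ y → r * w.length <
    (((Finset.range w.length).filter
      (fun i => ε ≤ dist (fw f (w.take i) x) (fw f (w.take i) y))).card : ℝ)

/-- `Q_w(f_0,…,f_{m-1},φ,ε,r)` (spanning-set version). -/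
noncomputable def Qw {ι : Type*} (f : ι → X → X) (φ : X → ℝ) (w : List ι) (ε r : ℝ) : ℝ :=
  sInf {s : ℝ | ∃ F : Finset X, rSpan f w ε r F ∧ s = ∑ x ∈ F, Real.exp (Sw f φ w x)}

/-- `Q_w^s(f_0,…,f_{m-1},φ,ε,r)` (separated-set version). -/
noncomputable def Qws {ι : Type*} (f : ι → X → X) (φ : X → ℝ) (w : List ι) (ε r : ℝ) : ℝ :=
  sSup {s : ℝ | ∃ E : Finset X, rSep f w ε r E ∧ s = ∑ x ∈ E, Real.exp (Sw f φ w x)}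

/-- `Q_n(f_0,…,f_{m-1},φ,ε,r) = (1/m^n) ∑_{|w|=n} Q_w`. -/
noncomputable def Qn {ι : Type*} [Fintype ι] (f : ι → X → X) (φ : X → ℝ)
    (n : ℕ) (ε r : ℝ) : ℝ :=
  (1 / (Fintype.card ι : ℝ) ^ n) * ∑ σ : Fin n → ι, Qw f φ (List.ofFn σ) ε r

/-- `Q_n^s(f_0,…,f_{m-1},φ,ε,r) = (1/m^n) ∑_{|w|=n} Q_w^s`. -/
noncomputable def Qns {ι : Type*} [Fintype ι] (f : ι → X → X) (φ : X → ℝ)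
    (n : ℕ) (ε r : ℝ) : ℝ :=
  (1 / (Fintype.card ι : ℝ) ^ n) * ∑ σ : Fin n → ι, Qws f φ (List.ofFn σ) ε r

/-- The topological `r`-pressure of the free semigroup action (spanning sets);
the limit as `ε → 0` is realised as a supremum over `ε > 0`, the quantity being
monotone in `ε`. -/
noncomputable def Pr {ι : Type*} [Fintype ι] (f : ι → X → X) (φ : X → ℝ) (r : ℝ) : EReal :=
  ⨆ ε ∈ Set.Ioi (0 : ℝ), atTop.limsup fun n : ℕ =>
    (((n : ℝ)⁻¹ * Real.log (Qn f φ n ε r) : ℝ) : EReal)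

/-- `P^s_r(f_0,…,f_{m-1},φ,ε)`, the fixed-`ε` separated-set `r`-pressure. -/
noncomputable def Pse {ι : Type*} [Fintype ι] (f : ι → X → X) (φ : X → ℝ) (ε r : ℝ) : EReal :=
  atTop.limsup fun n : ℕ => (((n : ℝ)⁻¹ * Real.log (Qns f φ n ε r) : ℝ) : EReal)

/-- The topological `r`-pressure of the free semigroup action (separated sets). -/
noncomputable def Ps {ι : Type*} [Fintype ι] (f : ι → X → X) (φ : X → ℝ) (r : ℝ) : EReal :=
  ⨆ ε ∈ Set.Ioi (0 : ℝ), Pse f φ ε r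

/-- Liminf variant of the separated-set topological `r`-pressure. -/
noncomputable def PsInf {ι : Type*} [Fintype ι] (f : ι → X → X) (φ : X → ℝ) (r : ℝ) : EReal :=
  ⨆ ε ∈ Set.Ioi (0 : ℝ), atTop.liminf fun n : ℕ =>
    (((n : ℝ)⁻¹ * Real.log (Qns f φ n ε r) : ℝ) : EReal)

/-- `F` is a `(w, ε)`-spanning set for the Bowen metric `d_w` of the free semigroup action. -/
def span0 {ι : Type*} (f : ι → X → X) (w : List ι) (ε : ℝ) (F : Finset X) : Prop :=
  ∀ x : X, ∃ y ∈ F, ∀ i < w.length,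
    dist (fw f (w.take i) x) (fw f (w.take i) y) ≤ ε

/-- `E` is a `(w, ε)`-separated set for the Bowen metric `d_w`. -/
def sep0 {ι : Type*} (f : ι → X → X) (w : List ι) (ε : ℝ) (E : Finset X) : Prop :=
  ∀ x ∈ E, ∀ y ∈ E, x ≠ y → ∃ i < w.length,
    ε < dist (fw f (w.take i) x) (fw f (w.take i) y)

noncomputable def Qw0 {ι : Type*} (f : ι → X → X) (φ : X → ℝ) (w : List ι) (ε : ℝ) : ℝ :=
  sInf {s : ℝ | ∃ F : Finset X, span0 f w ε F ∧ s = ∑ x ∈ F, Real.exp (Sw f φ w x)}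

noncomputable def Qws0 {ι : Type*} (f : ι → X → X) (φ : X → ℝ) (w : List ι) (ε : ℝ) : ℝ :=
  sSup {s : ℝ | ∃ E : Finset X, sep0 f w ε E ∧ s = ∑ x ∈ E, Real.exp (Sw f φ w x)}

noncomputable def Qn0 {ι : Type*} [Fintype ι] (f : ι → X → X) (φ : X → ℝ) (n : ℕ) (ε : ℝ) : ℝ :=
  (1 / (Fintype.card ι : ℝ) ^ n) * ∑ σ : Fin n → ι, Qw0 f φ (List.ofFn σ) ε

noncomputable def Qns0 {ι : Type*} [Fintype ι] (f : ι → X → X) (φ : X → ℝ) (n : ℕ) (ε : ℝ) : ℝ :=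
  (1 / (Fintype.card ι : ℝ) ^ n) * ∑ σ : Fin n → ι, Qws0 f φ (List.ofFn σ) ε

/-- The topological pressure of the free semigroup action. -/
noncomputable def P0 {ι : Type*} [Fintype ι] (f : ι → X → X) (φ : X → ℝ) : EReal :=
  ⨆ ε ∈ Set.Ioi (0 : ℝ), atTop.limsup fun n : ℕ =>
    (((n : ℝ)⁻¹ * Real.log (Qn0 f φ n ε) : ℝ) : EReal)

/-- `r_w(ε,r)`: the smallest cardinality of a `(w,ε,r)`-spanning set. -/
noncomputable def rSpanCard {ι : Type*} (f : ι → X → X) (w : List ι) (ε r : ℝ) : ℕ :=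
  sInf {k : ℕ | ∃ F : Finset X, rSpan f w ε r F ∧ F.card = k}

/-- The topological `r`-entropy of the free semigroup action. -/
noncomputable def hrEnt {ι : Type*} [Fintype ι] (f : ι → X → X) (r : ℝ) : EReal :=
  ⨆ ε ∈ Set.Ioi (0 : ℝ), atTop.limsup fun n : ℕ =>
    (((n : ℝ)⁻¹ * Real.log ((1 / (Fintype.card ι : ℝ) ^ n) *
      ∑ σ : Fin n → ι, (rSpanCard f (List.ofFn σ) ε r : ℝ)) : ℝ) : EReal)

end FSG


section Aux

variable {X : Type*} [MetricSpace X]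

lemma continuous_fw {ι : Type*} (f : ι → X → X) (hf : ∀ i, Continuous (f i))
    (w : List ι) : Continuous (fw f w) := by
  induction w with
  | nil => exact continuous_id
  | cons a w ih =>
    have : fw f (a :: w) = (fw f w) ∘ (f a) := by
      funext x; simp [fw, List.foldl]
    rw [this]; exact ih.comp (hf a)

lemma exists_rSpan {ι : Type*} [CompactSpace X] (f : ι → X → X)
    (hf : ∀ i, Continuous (f i)) (w : List ι) (ε r : ℝ) (hε : 0 < ε) (hr : 0 < r)
    (hn : 1 ≤ w.length) : ∃ F : Finset X, rSpan f w ε r F := by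
  set n := w.length with hn'
  set U : X → Set X := fun y =>
    {z : X | ∀ i < n, dist (fw f (w.take i) z) (fw f (w.take i) y) < ε} with hU'
  have hUopen : ∀ y, IsOpen (U y) := by
    intro y
    have : U y = ⋂ i ∈ Finset.range n,
        (fw f (w.take i)) ⁻¹' (Metric.ball (fw f (w.take i) y) ε) := by
      ext z; simp [hU', Metric.mem_ball, Finset.mem_range, dist_comm]
    rw [this]
    exact isOpen_biInter_finset fun i _ =>
      (Metric.isOpen_ball).preimage (continuous_fw f hf _)
  obtain ⟨t, ht⟩ := isCompact_univ.elim_finite_subcover U hUopen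
    (fun x _ => Set.mem_iUnion.2 ⟨x, fun i _ => by simp [dist_self, hε]⟩)
  refine ⟨t, fun x => ?_⟩
  obtain ⟨y, hyt, hxy⟩ := Set.mem_iUnion₂.1 (ht (Set.mem_univ x))
  refine ⟨y, hyt, ?_⟩
  have hfull : (Finset.range n).filter
      (fun i => dist (fw f (w.take i) x) (fw f (w.take i) y) < ε) = Finset.range n := by
    apply Finset.filter_true_of_mem
    intro i hi
    exact hxy i (Finset.mem_range.1 hi)
  rw [hfull, Finset.card_range]
  have : (1 : ℝ) ≤ (n : ℝ) := by exact_mod_cast hn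
  nlinarith

lemma Qws_le_key {ι : Type*} [CompactSpace X] (f : ι → X → X)
    (hf : ∀ i, Continuous (f i)) (φ : X → ℝ) (ε r M δ : ℝ)
    (hε : 0 < ε) (hr0 : 0 < r)
    (hM : IsGreatest (Set.range fun x => |φ x|) M)
    (hδ : δ = sSup {t : ℝ | ∃ x y : X, dist x y ≤ ε ∧ t = |φ x - φ y|})
    (w : List ι) (hn : 1 ≤ w.length) :
    Qws f φ w (2 * ε) (2 * r) ≤
      Real.exp (w.length * δ + 2 * w.length * r * M) * Qw f φ w ε r := by
  obtain ⟨x0, hx0⟩ := hM.1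
  have hMub : ∀ x, |φ x| ≤ M := fun x => hM.2 ⟨x, rfl⟩
  have hM0 : 0 ≤ M := le_trans (abs_nonneg _) (hMub x0)
  set n := w.length with hnn
  have hn1 : (1 : ℝ) ≤ (n : ℝ) := by exact_mod_cast hn
  -- δ facts
  have hδbdd : BddAbove {t : ℝ | ∃ x y : X, dist x y ≤ ε ∧ t = |φ x - φ y|} := by
    refine ⟨2 * M, ?_⟩
    rintro t ⟨x, y, -, rfl⟩
    calc |φ x - φ y| ≤ |φ x| + |φ y| := abs_sub _ _
      _ ≤ M + M := add_le_add (hMub x) (hMub y)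
      _ = 2 * M := by ring
  have hδ0 : 0 ≤ δ := by
    rw [hδ]
    refine le_csSup hδbdd ⟨x0, x0, by simp [le_of_lt hε], by simp⟩
  have hδle : ∀ x y : X, dist x y ≤ ε → |φ x - φ y| ≤ δ := by
    intro x y hxy
    rw [hδ]
    exact le_csSup hδbdd ⟨x, y, hxy, rfl⟩
  set K := (n : ℝ) * δ + 2 * n * r * M with hK
  -- the spanning-number set
  set T := {s : ℝ | ∃ F : Finset X, rSpan f w ε r F ∧
      s = ∑ x ∈ F, Real.exp (Sw f φ w x)} with hT
  obtain ⟨F0, hF0⟩ := exists_rSpan f hf w ε r hε hr0 hn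
  have hTne : T.Nonempty := ⟨_, F0, hF0, rfl⟩
  have hTnonneg : ∀ t ∈ T, 0 ≤ t := by
    rintro t ⟨F, -, rfl⟩
    exact Finset.sum_nonneg fun x _ => (Real.exp_pos _).le
  have hQw0 : 0 ≤ Qw f φ w ε r := Real.sInf_nonneg hTnonneg
  -- key: any separated sum ≤ exp K * any spanning sum
  have hkey : ∀ E : Finset X, rSep f w (2 * ε) (2 * r) E →
      ∀ F : Finset X, rSpan f w ε r F →
      ∑ x ∈ E, Real.exp (Sw f φ w x) ≤
        Real.exp K * ∑ y ∈ F, Real.exp (Sw f φ w y) := by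
    intro E hE F hF
    classical
    choose g hgF hgA using hF
    -- the "agreement" filter
    set A : X → X → Finset ℕ := fun x y => (Finset.range n).filter
      (fun i => dist (fw f (w.take i) x) (fw f (w.take i) y) < ε) with hA
    -- injectivity of g on E
    have hinj : ∀ x ∈ E, ∀ x' ∈ E, g x = g x' → x = x' := by
      intro x hx x' hx' hgxx
      by_contra hne
      set B := (Finset.range n).filter
        (fun i => 2 * ε ≤ dist (fw f (w.take i) x) (fw f (w.take i) x')) with hB
      have hBcard := hE x hx x' hx' hne
      have h1 : (1 - r) * n < ((A x (g x')).card : ℝ) := by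
        rw [← hgxx]; exact hgA x
      have h2 : (1 - r) * n < ((A x' (g x')).card : ℝ) := hgA x'
      have hunion : ((A x (g x')) ∪ (A x' (g x'))).card ≤ n := by
        calc ((A x (g x')) ∪ (A x' (g x'))).card
            ≤ (Finset.range n).card :=
              Finset.card_le_card (Finset.union_subset (Finset.filter_subset _ _)
                (Finset.filter_subset _ _))
          _ = n := Finset.card_range n
      have hiu : ((A x (g x')) ∩ (A x' (g x'))).card + ((A x (g x')) ∪ (A x' (g x'))).card
          = (A x (g x')).card + (A x' (g x')).card :=
        Finset.card_inter_add_card_union _ _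
      have hdisj : Disjoint ((A x (g x')) ∩ (A x' (g x'))) B := by
        rw [Finset.disjoint_left]
        intro i hi hiB
        rw [Finset.mem_inter] at hi
        have h1' := (Finset.mem_filter.1 hi.1).2
        have h2' := (Finset.mem_filter.1 hi.2).2
        have h3' := (Finset.mem_filter.1 hiB).2
        have : dist (fw f (w.take i) x) (fw f (w.take i) x') < 2 * ε := by
          calc dist (fw f (w.take i) x) (fw f (w.take i) x')
              ≤ dist (fw f (w.take i) x) (fw f (w.take i) (g x'))
                + dist (fw f (w.take i) (g x')) (fw f (w.take i) x') := dist_triangle _ _ _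
            _ < ε + ε := by
                have := dist_comm (fw f (w.take i) x') (fw f (w.take i) (g x'))
                exact add_lt_add h1' (by rw [dist_comm]; exact h2')
            _ = 2 * ε := by ring
        linarith
      have hsubun : ((A x (g x')) ∩ (A x' (g x'))) ∪ B ⊆ Finset.range n :=
        Finset.union_subset
          ((Finset.inter_subset_left).trans (Finset.filter_subset _ _))
          (Finset.filter_subset _ _)
      have hsum : ((A x (g x')) ∩ (A x' (g x'))).card + B.card ≤ n := by
        rw [← Finset.card_union_of_disjoint hdisj]
        calc _ ≤ (Finset.range n).card := Finset.card_le_card hsubun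
          _ = n := Finset.card_range n
      have c1 : (((A x (g x')) ∩ (A x' (g x'))).card : ℝ) + ((A x (g x')) ∪ (A x' (g x'))).card
          = ((A x (g x')).card : ℝ) + (A x' (g x')).card := by exact_mod_cast hiu
      have c2 : (((A x (g x')) ∪ (A x' (g x'))).card : ℝ) ≤ n := by exact_mod_cast hunion
      have c3 : (((A x (g x')) ∩ (A x' (g x'))).card : ℝ) + B.card ≤ n := by
        exact_mod_cast hsum
      nlinarith [hBcard]
    -- Birkhoff sum comparison
    have hSw : ∀ x : X, Sw f φ w x ≤ Sw f φ w (g x) + K := by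
      intro x
      have hAcard := hgA x
      set y := g x with hy
      have hsplit : Sw f φ w x - Sw f φ w y
          = ∑ i ∈ A x y, (φ (fw f (w.take i) x) - φ (fw f (w.take i) y))
            + ∑ i ∈ (Finset.range n).filter
              (fun i => ¬ dist (fw f (w.take i) x) (fw f (w.take i) y) < ε),
              (φ (fw f (w.take i) x) - φ (fw f (w.take i) y)) := by
        rw [hA]
        rw [Finset.sum_filter_add_sum_filter_not]
        simp [Sw, Finset.sum_sub_distrib, hnn]
      have hb1 : ∑ i ∈ A x y, (φ (fw f (w.take i) x) - φ (fw f (w.take i) y))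
          ≤ (A x y).card * δ := by
        rw [← nsmul_eq_mul]
        apply Finset.sum_le_card_nsmul
        intro i hi
        have := (Finset.mem_filter.1 hi).2
        exact le_trans (le_abs_self _) (hδle _ _ this.le)
      set Ac := (Finset.range n).filter
        (fun i => ¬ dist (fw f (w.take i) x) (fw f (w.take i) y) < ε) with hAc
      have hb2 : ∑ i ∈ Ac, (φ (fw f (w.take i) x) - φ (fw f (w.take i) y))
          ≤ Ac.card * (2 * M) := by
        rw [← nsmul_eq_mul]
        apply Finset.sum_le_card_nsmul
        intro i hi
        calc φ (fw f (w.take i) x) - φ (fw f (w.take i) y)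
            ≤ |φ (fw f (w.take i) x) - φ (fw f (w.take i) y)| := le_abs_self _
          _ ≤ |φ (fw f (w.take i) x)| + |φ (fw f (w.take i) y)| := abs_sub _ _
          _ ≤ M + M := add_le_add (hMub _) (hMub _)
          _ = 2 * M := by ring
      have hAn : ((A x y).card : ℝ) ≤ n := by
        have : (A x y).card ≤ (Finset.range n).card :=
          Finset.card_le_card (Finset.filter_subset _ _)
        rw [Finset.card_range] at this
        exact_mod_cast this
      have hAcn : (Ac.card : ℝ) + (A x y).card = n := by
        have := Finset.card_filter_add_card_filter_not (s := Finset.range n)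
          (p := fun i => dist (fw f (w.take i) x) (fw f (w.take i) y) < ε)
        rw [Finset.card_range] at this
        have h2 : (A x y).card + Ac.card = n := this
        push_cast [← h2]
        ring
      have hAclt : (Ac.card : ℝ) < r * n := by nlinarith [hAcard]
      have b1 : ((A x y).card : ℝ) * δ ≤ n * δ :=
        mul_le_mul_of_nonneg_right hAn hδ0
      have b2 : (Ac.card : ℝ) * (2 * M) ≤ r * n * (2 * M) :=
        mul_le_mul_of_nonneg_right hAclt.le (by linarith)
      have : Sw f φ w x - Sw f φ w y ≤ n * δ + r * n * (2 * M) := by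
        rw [hsplit]; exact add_le_add (le_trans hb1 b1) (le_trans hb2 b2)
      rw [hK]; linarith
    -- the sum comparison
    calc ∑ x ∈ E, Real.exp (Sw f φ w x)
        ≤ ∑ x ∈ E, Real.exp K * Real.exp (Sw f φ w (g x)) := by
          apply Finset.sum_le_sum
          intro x _
          rw [← Real.exp_add]
          exact Real.exp_le_exp.2 (by linarith [hSw x])
      _ = Real.exp K * ∑ x ∈ E, Real.exp (Sw f φ w (g x)) := by rw [Finset.mul_sum]
      _ ≤ Real.exp K * ∑ y ∈ F, Real.exp (Sw f φ w y) := by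
          apply mul_le_mul_of_nonneg_left _ (Real.exp_pos K).le
          have himg : ∑ x ∈ E, Real.exp (Sw f φ w (g x))
              = ∑ y ∈ E.image g, Real.exp (Sw f φ w y) :=
            (Finset.sum_image (f := fun y => Real.exp (Sw f φ w y))
              fun x hx x' hx' h => hinj x hx x' hx' h).symm
          rw [himg]
          apply Finset.sum_le_sum_of_subset_of_nonneg
          · intro y hy
            obtain ⟨x, hx, rfl⟩ := Finset.mem_image.1 hy
            exact hgF x
          · intro y _ _
            exact (Real.exp_pos _).le
  -- conclude
  apply Real.sSup_le
  · rintro s ⟨E, hE, rfl⟩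
    have hdiv : (∑ x ∈ E, Real.exp (Sw f φ w x)) / Real.exp K ≤ Qw f φ w ε r := by
      apply le_csInf hTne
      rintro t ⟨F, hF, rfl⟩
      rw [div_le_iff₀ (Real.exp_pos K)]
      rw [mul_comm]
      exact hkey E hE F hF
    calc ∑ x ∈ E, Real.exp (Sw f φ w x)
        = Real.exp K * ((∑ x ∈ E, Real.exp (Sw f φ w x)) / Real.exp K) := by
          field_simp
      _ ≤ Real.exp K * Qw f φ w ε r :=
          mul_le_mul_of_nonneg_left hdiv (Real.exp_pos K).le
  · exact mul_nonneg (Real.exp_pos K).le hQw0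

end Aux


theorem Qns_le_exp_mul_Qn
    {X : Type*} [MetricSpace X] [CompactSpace X] {m : ℕ}
    (f : Fin m → X → X) (hf : ∀ i, Continuous (f i))
    (φ : X → ℝ) (hφ : Continuous φ)
    (ε r M δ : ℝ) (hε : 0 < ε) (hr0 : 0 < r) (hr2 : r < 1 / 2)
    (hM : IsGreatest (Set.range fun x => |φ x|) M)
    (hδ : δ = sSup {t : ℝ | ∃ x y : X, dist x y ≤ ε ∧ t = |φ x - φ y|}) :
    ∀ n : ℕ, 1 ≤ n →
      Qns f φ n (2 * ε) (2 * r) ≤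
        Real.exp (n * δ + 2 * n * r * M) * Qn f φ n ε r := by
  intro n hn
  unfold Qns Qn
  have hc : (0:ℝ) ≤ 1 / (Fintype.card (Fin m) : ℝ) ^ n := by positivity
  have hsum : ∑ σ : Fin n → Fin m, Qws f φ (List.ofFn σ) (2 * ε) (2 * r)
      ≤ ∑ σ : Fin n → Fin m,
          Real.exp (n * δ + 2 * n * r * M) * Qw f φ (List.ofFn σ) ε r := by
    apply Finset.sum_le_sum
    intro σ _
    have h := Qws_le_key f hf φ ε r M δ hε hr0 hM hδ (List.ofFn σ)
      (by simpa [List.length_ofFn] using hn)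
    simpa [List.length_ofFn] using h
  calc (1 / (Fintype.card (Fin m) : ℝ) ^ n) *
        ∑ σ : Fin n → Fin m, Qws f φ (List.ofFn σ) (2 * ε) (2 * r)
      ≤ (1 / (Fintype.card (Fin m) : ℝ) ^ n) * ∑ σ : Fin n → Fin m,
          Real.exp (n * δ + 2 * n * r * M) * Qw f φ (List.ofFn σ) ε r :=
        mul_le_mul_of_nonneg_left hsum hc
    _ = Real.exp (n * δ + 2 * n * r * M) * ((1 / (Fintype.card (Fin m) : ℝ) ^ n) *
          ∑ σ : Fin n → Fin m, Qw f φ (List.ofFn σ) ε r) := by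
        rw [← Finset.mul_sum]; ring
end

section
/- Let (X,d) be a compact metric space, f_0,...,f_{m-1} continuous self-maps, φ continuous on X, M = max_{x∈X}|φ(x)|, and 0<r<1/2. Then P^s_{2r}(f_0,...,f_{m-1},φ) − 2Mr ≤ P_r(f_0,...,f_{m-1},φ) ≤ P^s_r(f_0,...,f_{m-1},φ). -/
open Filter Topology

section FSGAux

open Filter Topology

variable {X : Type*} {ι : Type*}

theorem fw_cons' {f : ι → X → X} (a : ι) (w : List ι) (x : X) :
    fw f (a :: w) x = fw f w (f a x) := rfl

theorem fw_take_succ {f : ι → X → X} {w : List ι} {i : ℕ} (hi : i < w.length) (x : X) :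
    fw f (w.take (i+1)) x = f w[i] (fw f (w.take i) x) := by
  rw [fw, List.take_succ, List.getElem?_eq_getElem hi, List.foldl_append]
  rfl

variable [MetricSpace X] [CompactSpace X] [Fintype ι]

theorem exists_mod {f : ι → X → X} (hf : ∀ a, Continuous (f a)) {η : ℝ} (hη : 0 < η) :
    ∃ δ : ℝ, 0 < δ ∧ δ ≤ η ∧ ∀ (a : ι) (u v : X), dist u v < δ → dist (f a u) (f a v) < η := by
  have h : ∀ a : ι, ∃ δ : ℝ, 0 < δ ∧ ∀ u v : X, dist u v < δ → dist (f a u) (f a v) < η := by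
    intro a
    have := Metric.uniformContinuous_iff.mp
      (CompactSpace.uniformContinuous_of_continuous (hf a)) η hη
    obtain ⟨δ, hδ, hd⟩ := this
    exact ⟨δ, hδ, fun u v huv => hd huv⟩
  choose δ hδpos hδ using h
  classical
  set S : Finset ℝ := insert η (Finset.univ.image δ) with hS
  have hSne : S.Nonempty := ⟨η, Finset.mem_insert_self _ _⟩
  refine ⟨S.min' hSne, ?_, ?_, ?_⟩
  · refine (Finset.lt_min'_iff S hSne).mpr fun b hb => ?_
    rw [hS] at hb
    rcases Finset.mem_insert.mp hb with h | h
    · rw [h]; exact hη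
    · obtain ⟨a, -, ha⟩ := Finset.mem_image.mp h
      rw [← ha]; exact hδpos a
  · exact S.min'_le _ (Finset.mem_insert_self _ _)
  · intro a u v huv
    exact hδ a u v (lt_of_lt_of_le huv (S.min'_le _ (Finset.mem_insert_of_mem
      (Finset.mem_image_of_mem δ (Finset.mem_univ a)))))

theorem exists_mod_iter {f : ι → X → X} (hf : ∀ a, Continuous (f a)) (n : ℕ) {η : ℝ}
    (hη : 0 < η) :
    ∃ δ : ℝ, 0 < δ ∧ δ ≤ η ∧ ∀ (w : List ι) (x y : X), dist x y < δ →
      ∀ i ≤ n, dist (fw f (w.take i) x) (fw f (w.take i) y) < η := by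
  induction n with
  | zero =>
    refine ⟨η, hη, le_refl _, fun w x y hxy i hi => ?_⟩
    interval_cases i
    simpa [fw] using hxy
  | succ n ih =>
    obtain ⟨δn, hδn, hδnη, hn⟩ := ih
    obtain ⟨δ, hδ, hδδn, hmod⟩ := exists_mod hf hδn
    refine ⟨δ, hδ, le_trans hδδn hδnη, fun w x y hxy i hi => ?_⟩
    match w, i with
    | w, 0 => simpa [fw] using lt_of_lt_of_le hxy (le_trans hδδn hδnη)
    | [], i =>
      simp only [List.take_nil]
      simpa [fw] using lt_of_lt_of_le hxy (le_trans hδδn hδnη)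
    | a :: w, (j+1) =>
      rw [List.take_succ_cons, fw_cons', fw_cons']
      exact hn w (f a x) (f a y) (hmod a x y hxy) j (Nat.succ_le_succ_iff.mp hi)

theorem exists_net {δ : ℝ} (hδ : 0 < δ) :
    ∃ F : Finset X, ∀ x : X, ∃ y ∈ F, dist x y < δ := by
  classical
  obtain ⟨t, -, htf, ht⟩ :=
    finite_cover_balls_of_compact (isCompact_univ : IsCompact (Set.univ : Set X)) hδ
  refine ⟨htf.toFinset, fun x => ?_⟩
  have := ht (Set.mem_univ x)
  simp only [Set.mem_iUnion] at this
  obtain ⟨y, hyt, hxy⟩ := this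
  exact ⟨y, htf.mem_toFinset.mpr hyt, Metric.mem_ball.mp hxy⟩

theorem exists_full_net {f : ι → X → X} (hf : ∀ a, Continuous (f a)) (n : ℕ) {η : ℝ}
    (hη : 0 < η) :
    ∃ F : Finset X, ∀ x : X, ∃ y ∈ F, ∀ (w : List ι), ∀ i ≤ n,
      dist (fw f (w.take i) x) (fw f (w.take i) y) < η := by
  obtain ⟨δ, hδ, -, hiter⟩ := exists_mod_iter hf n hη
  obtain ⟨F, hF⟩ := exists_net (X := X) hδ
  refine ⟨F, fun x => ?_⟩
  obtain ⟨y, hyF, hxy⟩ := hF x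
  exact ⟨y, hyF, fun w i hi => hiter w x y hxy i hi⟩

theorem exists_pack {ε : ℝ} (hε : 0 < ε) :
    ∃ P : ℕ, 0 < P ∧ ∀ A : Finset X,
      (∀ x ∈ A, ∀ y ∈ A, x ≠ y → ε ≤ dist x y) → A.card ≤ P := by
  classical
  obtain ⟨F, hF⟩ := exists_net (X := X) (half_pos hε)
  refine ⟨max 1 F.card, lt_of_lt_of_le one_pos (le_max_left _ _), fun A hA => ?_⟩
  have : A.card ≤ F.card := by
    choose g hgF hg using fun a => hF a
    refine Finset.card_le_card_of_injOn g (fun a _ => hgF a) ?_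
    intro a ha b hb hab
    by_contra hne
    have : dist a b < ε := by
      calc dist a b ≤ dist a (g a) + dist (g b) b := by
            rw [hab]; exact dist_triangle_right a b (g b) |>.trans (by rw [dist_comm b (g b)])
        _ < ε/2 + ε/2 := add_lt_add (hg a) (by rw [dist_comm]; exact hg b)
        _ = ε := add_halves ε
    exact absurd (hA a ha b hb hne) (not_le.mpr this)
  exact le_trans this (le_max_right _ _)

end FSGAux
section FSGAuxB

open Filter Topology

variable {X : Type*} {ι : Type*} [MetricSpace X]

/-- number of `far` times along the word -/
noncomputable def farC (f : ι → X → X) (w : List ι) (ε : ℝ) (x y : X) : ℕ :=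
  ((Finset.range w.length).filter
    (fun i => ε ≤ dist (fw f (w.take i) x) (fw f (w.take i) y))).card

/-- number of `close` times along the word -/
noncomputable def closeC (f : ι → X → X) (w : List ι) (ε : ℝ) (x y : X) : ℕ :=
  ((Finset.range w.length).filter
    (fun i => dist (fw f (w.take i) x) (fw f (w.take i) y) < ε)).card

set_option linter.unusedSectionVars false

variable {f : ι → X → X} {φ : X → ℝ} {w : List ι} {ε r M : ℝ}

theorem rSep_iff {E : Finset X} :
    rSep f w ε r E ↔ ∀ x ∈ E, ∀ y ∈ E, x ≠ y → r * w.length < (farC f w ε x y : ℝ) :=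
  Iff.rfl

theorem rSpan_iff {F : Finset X} :
    rSpan f w ε r F ↔ ∀ x : X, ∃ y ∈ F, (1 - r) * w.length < (closeC f w ε x y : ℝ) :=
  Iff.rfl

theorem closeC_add_farC (x y : X) : closeC f w ε x y + farC f w ε x y = w.length := by
  classical
  have h := Finset.card_filter_add_card_filter_not
    (s := Finset.range w.length)
    (p := fun i => dist (fw f (w.take i) x) (fw f (w.take i) y) < ε)
  rw [Finset.card_range] at h
  have h2 : (Finset.range w.length).filter
      (fun i => ε ≤ dist (fw f (w.take i) x) (fw f (w.take i) y)) =
      (Finset.range w.length).filter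
      (fun i => ¬ dist (fw f (w.take i) x) (fw f (w.take i) y) < ε) :=
    Finset.filter_congr (fun i _ => by rw [not_lt])
  rw [closeC, farC, h2]
  exact h

theorem farC_comm (x y : X) : farC f w ε x y = farC f w ε y x := by
  rw [farC, farC]
  congr 1
  apply Finset.filter_congr
  intro i _
  rw [dist_comm]

theorem farC_anti {ε₁ ε₂ : ℝ} (h : ε₁ ≤ ε₂) (x y : X) :
    farC f w ε₂ x y ≤ farC f w ε₁ x y := by
  apply Finset.card_le_card
  intro i hi
  simp only [Finset.mem_filter] at hi ⊢
  exact ⟨hi.1, le_trans h hi.2⟩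

theorem exists_far_of_farC_pos {x y : X} (h : 0 < farC f w ε x y) :
    ∃ i < w.length, ε ≤ dist (fw f (w.take i) x) (fw f (w.take i) y) := by
  obtain ⟨i, hi⟩ := Finset.card_pos.mp h
  simp only [Finset.mem_filter, Finset.mem_range] at hi
  exact ⟨i, hi.1, hi.2⟩

theorem Sw_le_of_abs (hM : ∀ x, |φ x| ≤ M) (x : X) : Sw f φ w x ≤ w.length * M := by
  rw [Sw]
  calc ∑ i ∈ Finset.range w.length, φ (fw f (w.take i) x)
      ≤ ∑ _i ∈ Finset.range w.length, M :=
        Finset.sum_le_sum fun i _ => (abs_le.mp (hM _)).2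
    _ = w.length * M := by rw [Finset.sum_const, Finset.card_range, nsmul_eq_mul]

theorem neg_le_Sw_of_abs (hM : ∀ x, |φ x| ≤ M) (x : X) : -(w.length * M) ≤ Sw f φ w x := by
  rw [Sw]
  calc -(w.length * M) = ∑ _i ∈ Finset.range w.length, (-M) := by
        rw [Finset.sum_const, Finset.card_range, nsmul_eq_mul]; ring
    _ ≤ ∑ i ∈ Finset.range w.length, φ (fw f (w.take i) x) :=
        Finset.sum_le_sum fun i _ => (abs_le.mp (hM _)).1

theorem exp_Sw_le_of_abs (hM : ∀ x, |φ x| ≤ M) (x : X) :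
    Real.exp (Sw f φ w x) ≤ Real.exp (w.length * M) :=
  Real.exp_le_exp.mpr (Sw_le_of_abs hM x)

theorem le_exp_Sw_of_abs (hM : ∀ x, |φ x| ≤ M) (x : X) :
    Real.exp (-(w.length * M)) ≤ Real.exp (Sw f φ w x) :=
  Real.exp_le_exp.mpr (neg_le_Sw_of_abs hM x)

end FSGAuxB
section FSGAuxC

open Filter Topology

set_option linter.unusedSectionVars false

variable {X : Type*} {ι : Type*} [MetricSpace X] [CompactSpace X] [Fintype ι]
variable {f : ι → X → X} {φ : X → ℝ} {w : List ι} {ε r M : ℝ}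

theorem rSpan_of_allclose {F : Finset X} (hr : 0 < r) (hlen : 1 ≤ w.length)
    (hF : ∀ x : X, ∃ y ∈ F, ∀ i < w.length,
      dist (fw f (w.take i) x) (fw f (w.take i) y) < ε) :
    rSpan f w ε r F := by
  intro x
  obtain ⟨y, hyF, hy⟩ := hF x
  refine ⟨y, hyF, ?_⟩
  have hfull : (Finset.range w.length).filter
      (fun i => dist (fw f (w.take i) x) (fw f (w.take i) y) < ε) = Finset.range w.length :=
    Finset.filter_true_of_mem (fun i hi => hy i (Finset.mem_range.mp hi))
  rw [hfull, Finset.card_range]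
  have hn : (0 : ℝ) < w.length := by exact_mod_cast hlen
  nlinarith

theorem spanSums_nonempty (hf : ∀ a, Continuous (f a)) (hr : 0 < r) (hlen : 1 ≤ w.length)
    (hε : 0 < ε) :
    Set.Nonempty {s : ℝ | ∃ F : Finset X, rSpan f w ε r F ∧
      s = ∑ x ∈ F, Real.exp (Sw f φ w x)} := by
  obtain ⟨F, hF⟩ := exists_full_net hf w.length hε
  exact ⟨_, F, rSpan_of_allclose hr hlen
    (fun x => (hF x).imp fun y hy => ⟨hy.1, fun i hi => hy.2 w i (le_of_lt hi)⟩), rfl⟩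

theorem spanSums_bddBelow :
    BddBelow {s : ℝ | ∃ F : Finset X, rSpan f w ε r F ∧
      s = ∑ x ∈ F, Real.exp (Sw f φ w x)} :=
  ⟨0, by rintro s ⟨F, -, rfl⟩; exact Finset.sum_nonneg fun x _ => (Real.exp_pos _).le⟩

theorem Qw_le_sum {F : Finset X} (hF : rSpan f w ε r F) :
    Qw f φ w ε r ≤ ∑ x ∈ F, Real.exp (Sw f φ w x) :=
  csInf_le spanSums_bddBelow ⟨F, hF, rfl⟩

theorem exp_le_Qw [Nonempty X] (hf : ∀ a, Continuous (f a)) (hM : ∀ x, |φ x| ≤ M)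
    (hr : 0 < r) (hlen : 1 ≤ w.length) (hε : 0 < ε) :
    Real.exp (-(w.length * M)) ≤ Qw f φ w ε r := by
  apply le_csInf (spanSums_nonempty hf hr hlen hε)
  rintro s ⟨F, hF, rfl⟩
  obtain ⟨y, hyF, -⟩ := hF (Classical.arbitrary X)
  calc Real.exp (-(w.length * M)) ≤ Real.exp (Sw f φ w y) := le_exp_Sw_of_abs hM y
    _ ≤ ∑ x ∈ F, Real.exp (Sw f φ w x) :=
        Finset.single_le_sum (fun i _ => (Real.exp_pos _).le) hyF

theorem Qw_pos [Nonempty X] (hf : ∀ a, Continuous (f a)) (hM : ∀ x, |φ x| ≤ M)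
    (hr : 0 < r) (hlen : 1 ≤ w.length) (hε : 0 < ε) :
    0 < Qw f φ w ε r :=
  lt_of_lt_of_le (Real.exp_pos _) (exp_le_Qw hf hM hr hlen hε)

theorem sep_card_bound (hf : ∀ a, Continuous (f a)) (hε : 0 < ε) :
    ∃ K : ℕ, ∀ E : Finset X,
      (∀ x ∈ E, ∀ y ∈ E, x ≠ y → ∃ i < w.length,
        ε ≤ dist (fw f (w.take i) x) (fw f (w.take i) y)) → E.card ≤ K := by
  classical
  obtain ⟨F, hF⟩ := exists_full_net hf w.length (half_pos hε)
  refine ⟨F.card, fun E hE => ?_⟩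
  choose g hgF hg using fun x : X => hF x
  refine Finset.card_le_card_of_injOn g (fun a _ => hgF a) ?_
  intro a ha b hb hab
  by_contra hne
  obtain ⟨i, hi, hdist⟩ := hE a ha b hb hne
  have h1 := hg a w i (le_of_lt hi)
  have h2 := hg b w i (le_of_lt hi)
  rw [hab] at h1
  have : dist (fw f (w.take i) a) (fw f (w.take i) b) < ε := by
    calc dist (fw f (w.take i) a) (fw f (w.take i) b)
        ≤ dist (fw f (w.take i) a) (fw f (w.take i) (g b))
          + dist (fw f (w.take i) (g b)) (fw f (w.take i) b) := dist_triangle _ _ _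
      _ < ε/2 + ε/2 := add_lt_add h1 (by rw [dist_comm]; exact h2)
      _ = ε := add_halves ε
  exact absurd hdist (not_le.mpr this)

theorem rSep_pairs_far {E : Finset X} (hE : rSep f w ε r E) (hr : 0 ≤ r) :
    ∀ x ∈ E, ∀ y ∈ E, x ≠ y → ∃ i < w.length,
      ε ≤ dist (fw f (w.take i) x) (fw f (w.take i) y) := by
  intro x hx y hy hxy
  apply exists_far_of_farC_pos
  have h := hE x hx y hy hxy
  have h0 : (0 : ℝ) ≤ r * w.length := mul_nonneg hr (Nat.cast_nonneg _)
  exact_mod_cast lt_of_le_of_lt h0 h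

theorem sepSums_bddAbove (hf : ∀ a, Continuous (f a)) (hM : ∀ x, |φ x| ≤ M)
    (hε : 0 < ε) (hr : 0 ≤ r) :
    BddAbove {s : ℝ | ∃ E : Finset X, rSep f w ε r E ∧
      s = ∑ x ∈ E, Real.exp (Sw f φ w x)} := by
  obtain ⟨K, hK⟩ := sep_card_bound (f := f) (w := w) hf hε
  refine ⟨K * Real.exp (w.length * M), ?_⟩
  rintro s ⟨E, hE, rfl⟩
  calc ∑ x ∈ E, Real.exp (Sw f φ w x) ≤ E.card • Real.exp (w.length * M) :=
        Finset.sum_le_card_nsmul _ _ _ (fun x _ => exp_Sw_le_of_abs hM x)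
    _ = (E.card : ℝ) * Real.exp (w.length * M) := nsmul_eq_mul _ _
    _ ≤ K * Real.exp (w.length * M) := by
        have : (E.card : ℝ) ≤ K := by exact_mod_cast hK E (rSep_pairs_far hE hr)
        exact mul_le_mul_of_nonneg_right this (Real.exp_pos _).le

theorem zero_mem_sepSums :
    (0 : ℝ) ∈ {s : ℝ | ∃ E : Finset X, rSep f w ε r E ∧
      s = ∑ x ∈ E, Real.exp (Sw f φ w x)} :=
  ⟨∅, fun x hx => absurd hx (Finset.notMem_empty x), by simp⟩

theorem sum_le_Qws (hf : ∀ a, Continuous (f a)) (hM : ∀ x, |φ x| ≤ M)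
    (hε : 0 < ε) (hr : 0 ≤ r) {E : Finset X} (hE : rSep f w ε r E) :
    ∑ x ∈ E, Real.exp (Sw f φ w x) ≤ Qws f φ w ε r :=
  le_csSup (sepSums_bddAbove hf hM hε hr) ⟨E, hE, rfl⟩

theorem exp_Sw_le_Qws (hf : ∀ a, Continuous (f a)) (hM : ∀ x, |φ x| ≤ M)
    (hε : 0 < ε) (hr : 0 ≤ r) (x : X) :
    Real.exp (Sw f φ w x) ≤ Qws f φ w ε r := by
  have h : rSep f w ε r {x} := by
    intro a ha b hb hab
    rw [Finset.mem_singleton] at ha hb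
    exact absurd (ha.trans hb.symm) hab
  simpa using sum_le_Qws hf hM hε hr h

theorem Qws_nonneg (hf : ∀ a, Continuous (f a)) (hM : ∀ x, |φ x| ≤ M)
    (hε : 0 < ε) (hr : 0 ≤ r) :
    0 ≤ Qws f φ w ε r :=
  le_csSup (sepSums_bddAbove hf hM hε hr) zero_mem_sepSums

theorem Qws_pos [Nonempty X] (hf : ∀ a, Continuous (f a)) (hM : ∀ x, |φ x| ≤ M)
    (hε : 0 < ε) (hr : 0 ≤ r) :
    0 < Qws f φ w ε r :=
  lt_of_lt_of_le (Real.exp_pos _) (exp_Sw_le_Qws hf hM hε hr (Classical.arbitrary X))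

theorem Qws_anti (hf : ∀ a, Continuous (f a)) (hM : ∀ x, |φ x| ≤ M) {ε₁ ε₂ : ℝ}
    (hε₁ : 0 < ε₁) (h12 : ε₁ ≤ ε₂) (hr : 0 ≤ r) :
    Qws f φ w ε₂ r ≤ Qws f φ w ε₁ r := by
  apply csSup_le_csSup (sepSums_bddAbove hf hM hε₁ hr) ⟨0, zero_mem_sepSums⟩
  rintro s ⟨E, hE, rfl⟩
  refine ⟨E, fun x hx y hy hxy => ?_, rfl⟩
  have := hE x hx y hy hxy
  have hm : (farC f w ε₂ x y : ℝ) ≤ farC f w ε₁ x y := by exact_mod_cast farC_anti h12 x y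
  exact lt_of_lt_of_le this hm

end FSGAuxC
section FSGAuxD

open Filter Topology

set_option linter.unusedSectionVars false
set_option maxHeartbeats 1000000

variable {X : Type*} {ι : Type*} [MetricSpace X] [CompactSpace X] [Fintype ι]
variable {f : ι → X → X} {φ : X → ℝ} {w : List ι} {ε ε' r M : ℝ}

theorem edge_struct (hr : 0 < r) (hlen : 1 ≤ w.length)
    (hε' : 0 < ε') (hε'2 : 2*ε' ≤ ε)
    (hmod : ∀ (a : ι) (u v : X), dist u v < ε' → dist (f a u) (f a v) < ε)
    {x y : X}
    (h1 : r * w.length ≤ (farC f w ε x y : ℝ))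
    (h2 : (farC f w ε' x y : ℝ) ≤ r * w.length) :
    ∃ k : ℕ, (k : ℝ) = r * w.length ∧
      (∀ j, j < k → ε ≤ dist (fw f (w.take j) x) (fw f (w.take j) y)) ∧
      (∀ j < w.length, k ≤ j → dist (fw f (w.take j) x) (fw f (w.take j) y) < ε') := by
  classical
  set n := w.length with hn
  set d : ℕ → ℝ := fun j => dist (fw f (w.take j) x) (fw f (w.take j) y) with hd
  set S : Finset ℕ := (Finset.range n).filter (fun i => ε ≤ d i) with hS
  set T : Finset ℕ := (Finset.range n).filter (fun i => ε' ≤ d i) with hT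
  have mem_S : ∀ j, j ∈ S ↔ j < n ∧ ε ≤ d j := by
    intro j; rw [hS, Finset.mem_filter, Finset.mem_range]
  have mem_T : ∀ j, j ∈ T ↔ j < n ∧ ε' ≤ d j := by
    intro j; rw [hT, Finset.mem_filter, Finset.mem_range]
  have hεε' : ε' ≤ ε := by linarith
  have hST : S ⊆ T := by
    intro i hi
    rw [mem_S] at hi
    rw [mem_T]
    exact ⟨hi.1, le_trans hεε' hi.2⟩
  have hSfar : S.card = farC f w ε x y := rfl
  have hTfar : T.card = farC f w ε' x y := rfl
  have hTS : T.card ≤ S.card := by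
    have : (T.card : ℝ) ≤ (S.card : ℝ) := by rw [hSfar, hTfar]; exact le_trans h2 h1
    exact_mod_cast this
  have hSeqT : S = T := Finset.eq_of_subset_of_card_le hST hTS
  have hkr : (S.card : ℝ) = r * n := by
    apply le_antisymm
    · rw [hSeqT, hTfar]; exact h2
    · rw [hSfar]; exact h1
  have hdich : ∀ j < n, d j < ε' ∨ ε ≤ d j := by
    intro j hj
    by_cases hmem : j ∈ S
    · right; exact ((mem_S j).mp hmem).2
    · left
      have hT' : j ∉ T := fun ht => hmem (hSeqT ▸ ht)
      rw [mem_T] at hT'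
      push_neg at hT'
      exact hT' hj
  have hpred : ∀ j, j + 1 ∈ S → j ∈ S := by
    intro j hj1
    by_contra hj
    have hj1n : j + 1 < n := ((mem_S _).mp hj1).1
    have hjn : j < n := Nat.lt_of_succ_lt hj1n
    have hdj : d j < ε' := by
      rcases hdich j hjn with h | h
      · exact h
      · exact absurd ((mem_S j).mpr ⟨hjn, h⟩) hj
    have hlt : d (j+1) < ε := by
      show dist (fw f (w.take (j+1)) x) (fw f (w.take (j+1)) y) < ε
      have hjw : j < w.length := hn ▸ hjn
      rw [fw_take_succ hjw, fw_take_succ hjw]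
      exact hmod _ _ _ hdj
    exact absurd ((mem_S _).mp hj1).2 (not_le.mpr hlt)
  have hdown : ∀ j, j ∈ S → ∀ i, i ≤ j → i ∈ S := by
    intro j
    induction j with
    | zero => intro hj i hi; rw [Nat.le_zero.mp hi]; exact hj
    | succ j ih =>
      intro hj i hi
      rcases Nat.eq_or_lt_of_le hi with h | h
      · rw [h]; exact hj
      · exact ih (hpred j hj) i (Nat.lt_succ_iff.mp h)
  have hrange : Finset.range S.card ⊆ S := by
    intro i hi
    rw [Finset.mem_range] at hi
    by_contra hiS
    have hsub : S ⊆ Finset.range i := by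
      intro j hj
      rw [Finset.mem_range]
      by_contra hji
      exact hiS (hdown j hj i (le_of_not_gt hji))
    have := Finset.card_le_card hsub
    rw [Finset.card_range] at this
    omega
  have hSrange : S = Finset.range S.card := by
    refine (Finset.eq_of_subset_of_card_le hrange ?_).symm
    rw [Finset.card_range]
  refine ⟨S.card, by rw [hkr], ?_, ?_⟩
  · intro j hj
    exact ((mem_S j).mp (hrange (Finset.mem_range.mpr hj))).2
  · intro j hjn hkj
    have hjS : j ∉ S := by
      rw [hSrange, Finset.mem_range]
      omega
    rcases hdich j (hn ▸ hjn) with h | h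
    · exact h
    · exact absurd ((mem_S j).mpr ⟨hn ▸ hjn, h⟩) hjS

end FSGAuxD
section FSGAuxE

open Filter Topology

set_option linter.unusedSectionVars false
set_option maxHeartbeats 1000000

variable {X : Type*} {ι : Type*} [MetricSpace X] [CompactSpace X] [Fintype ι]
variable {f : ι → X → X} {φ : X → ℝ} {w : List ι} {ε ε' r M : ℝ}

theorem partition_lemma (hr : 0 < r) (hlen : 1 ≤ w.length)
    (hε' : 0 < ε') (hε'2 : 2*ε' ≤ ε)
    (hmod : ∀ (a : ι) (u v : X), dist u v < ε' → dist (f a u) (f a v) < ε)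
    {P : ℕ} (hP : 0 < P)
    (hpack : ∀ A : Finset X, (∀ x ∈ A, ∀ y ∈ A, x ≠ y → ε ≤ dist x y) → A.card ≤ P)
    {G : Finset X} (hG : ∀ x ∈ G, ∀ y ∈ G, x ≠ y → r * w.length ≤ (farC f w ε x y : ℝ)) :
    ∀ (N : ℕ) (H : Finset X), H.card ≤ N → H ⊆ G → ∃ parts : Fin P → Finset X,
      (∀ i, rSep f w ε' r (parts i)) ∧ (∀ i, parts i ⊆ H) ∧
      (∀ i j, i ≠ j → Disjoint (parts i) (parts j)) ∧ (∀ a ∈ H, ∃ i, a ∈ parts i) := by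
  classical
  letI : DecidableEq X := Classical.decEq X
  intro N
  induction N with
  | zero =>
    intro H hcard _
    have : H = ∅ := Finset.card_eq_zero.mp (Nat.le_zero.mp hcard)
    subst this
    exact ⟨fun _ => ∅, fun i x hx => absurd hx (Finset.notMem_empty x),
      fun i => Finset.empty_subset _, fun i j _ => Finset.disjoint_empty_left _,
      fun a ha => absurd ha (Finset.notMem_empty a)⟩
  | succ N ih =>
    intro H hcard hHG
    rcases Finset.eq_empty_or_nonempty H with hHe | ⟨g, hgH⟩
    · subst hHe
      exact ⟨fun _ => ∅, fun i x hx => absurd hx (Finset.notMem_empty x),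
        fun i => Finset.empty_subset _, fun i j _ => Finset.disjoint_empty_left _,
        fun a ha => absurd ha (Finset.notMem_empty a)⟩
    · set H' : Finset X := H.erase g with hH'
      have hH'G : H' ⊆ G := (Finset.erase_subset g H).trans hHG
      have hH'card : H'.card ≤ N := by
        rw [hH', Finset.card_erase_of_mem hgH]
        omega
      obtain ⟨parts', hsep', hsub', hdisj', huni'⟩ := ih H' hH'card hH'G
      set NG : Finset X := H'.filter (fun y => (farC f w ε' g y : ℝ) ≤ r * w.length) with hNG
      have hgG : g ∈ G := hHG hgH
      -- edge structure for members of NG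
      have hedge : ∀ y ∈ NG, ∃ k : ℕ, (k : ℝ) = r * w.length ∧
          (∀ j, j < k → ε ≤ dist (fw f (w.take j) g) (fw f (w.take j) y)) ∧
          (∀ j < w.length, k ≤ j →
            dist (fw f (w.take j) g) (fw f (w.take j) y) < ε') := by
        intro y hy
        rw [hNG, Finset.mem_filter] at hy
        have hygne : y ≠ g := Finset.ne_of_mem_erase (hH' ▸ hy.1)
        exact edge_struct hr hlen hε' hε'2 hmod
          (hG g hgG y (hH'G (hH' ▸ hy.1)) hygne.symm) hy.2
      have hkpos : ∀ k : ℕ, (k : ℝ) = r * w.length → 0 < k := by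
        intro k hk
        have : (0 : ℝ) < k := by
          rw [hk]
          have : (1 : ℝ) ≤ (w.length : ℝ) := by exact_mod_cast hlen
          nlinarith
        exact_mod_cast this
      -- insert g NG is ε-separated at time 0
      have hA : ∀ p ∈ insert g NG, ∀ q ∈ insert g NG, p ≠ q → ε ≤ dist p q := by
        intro p hp q hq hpq
        rcases Finset.mem_insert.mp hp with hp | hp <;>
          rcases Finset.mem_insert.mp hq with hq | hq
        · exact absurd (hp.trans hq.symm) hpq
        · subst hp
          obtain ⟨k, hk, hfar, -⟩ := hedge q hq
          exact hfar 0 (hkpos k hk)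
        · subst hq
          obtain ⟨k, hk, hfar, -⟩ := hedge p hp
          rw [dist_comm]
          exact hfar 0 (hkpos k hk)
        · -- both in NG
          obtain ⟨k₁, hk₁, hfar₁, hclose₁⟩ := hedge p hp
          obtain ⟨k₂, hk₂, hfar₂, hclose₂⟩ := hedge q hq
          have hkk : k₁ = k₂ := by
            have : (k₁ : ℝ) = (k₂ : ℝ) := by rw [hk₁, hk₂]
            exact_mod_cast this
          subst hkk
          have hpG : p ∈ G := hH'G (by rw [hNG, Finset.mem_filter] at hp; exact hp.1)
          have hqG : q ∈ G := hH'G (by rw [hNG, Finset.mem_filter] at hq; exact hq.1)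
          set D : Finset ℕ := (Finset.range w.length).filter
            (fun i => ε ≤ dist (fw f (w.take i) p) (fw f (w.take i) q)) with hD
          have hDsub : D ⊆ Finset.range k₁ := by
            intro j hj
            rw [hD, Finset.mem_filter, Finset.mem_range] at hj
            rw [Finset.mem_range]
            by_contra hjk
            push_neg at hjk
            have h1 := hclose₁ j hj.1 hjk
            have h2 := hclose₂ j hj.1 hjk
            have : dist (fw f (w.take j) p) (fw f (w.take j) q) < ε := by
              calc dist (fw f (w.take j) p) (fw f (w.take j) q)
                  ≤ dist (fw f (w.take j) p) (fw f (w.take j) g)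
                    + dist (fw f (w.take j) g) (fw f (w.take j) q) := dist_triangle _ _ _
                _ < ε' + ε' := add_lt_add (by rw [dist_comm]; exact h1) h2
                _ = 2*ε' := by ring
                _ ≤ ε := hε'2
            exact absurd hj.2 (not_le.mpr this)
          have hDcard : (D.card : ℝ) = r * w.length := by
            apply le_antisymm
            · have := Finset.card_le_card hDsub
              rw [Finset.card_range] at this
              calc (D.card : ℝ) ≤ (k₁ : ℝ) := by exact_mod_cast this
                _ = r * w.length := hk₁
            · exact hG p hpG q hqG hpq
          have hDk : D.card = k₁ := by
            have : (D.card : ℝ) = (k₁ : ℝ) := by rw [hDcard, hk₁]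
            exact_mod_cast this
          have hDeq : D = Finset.range k₁ := by
            apply Finset.eq_of_subset_of_card_le hDsub
            rw [Finset.card_range, hDk]
          have h0D : 0 ∈ D := by
            rw [hDeq, Finset.mem_range]
            exact hkpos k₁ hk₁
          rw [hD, Finset.mem_filter] at h0D
          exact h0D.2
      have hgNG : g ∉ NG := by
        intro hmem
        rw [hNG, Finset.mem_filter] at hmem
        exact absurd rfl (Finset.ne_of_mem_erase (hH' ▸ hmem.1))
      have hNGcard : NG.card + 1 ≤ P := by
        have := hpack (insert g NG) (by
          intro p hp q hq hpq
          exact hA p hp q hq hpq)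
        rwa [Finset.card_insert_of_notMem hgNG] at this
      -- find a part disjoint from NG
      have hex : ∃ i₀ : Fin P, Disjoint (parts' i₀) NG := by
        by_contra hcon
        push_neg at hcon
        have hch : ∀ i : Fin P, ∃ a, a ∈ parts' i ∧ a ∈ NG := by
          intro i
          exact Finset.not_disjoint_iff.mp (hcon i)
        choose ych h1' h2' using hch
        have hinj : Set.InjOn ych (Finset.univ : Finset (Fin P)) := by
          intro i _ j _ hij
          by_contra hne
          exact absurd (h1' j) (Finset.disjoint_left.mp (hdisj' i j hne) (hij ▸ h1' i))
        have := Finset.card_le_card_of_injOn ych (fun i _ => h2' i) hinj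
        rw [Finset.card_univ, Fintype.card_fin] at this
        omega
      obtain ⟨i₀, hi₀⟩ := hex
      refine ⟨Function.update parts' i₀ (insert g (parts' i₀)), ?_, ?_, ?_, ?_⟩
      · intro i
        rcases eq_or_ne i i₀ with h | h
        · rw [h, Function.update_self]
          intro a ha b hb hab
          rcases Finset.mem_insert.mp ha with ha | ha <;>
            rcases Finset.mem_insert.mp hb with hb | hb
          · exact absurd (ha.trans hb.symm) hab
          · have hbH' : b ∈ H' := hsub' i₀ hb
            have hbNG : b ∉ NG := Finset.disjoint_left.mp hi₀ hb
            have hlt : ¬ ((farC f w ε' g b : ℝ) ≤ r * w.length) := fun hle =>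
              hbNG (by rw [hNG, Finset.mem_filter]; exact ⟨hbH', hle⟩)
            rw [ha]
            exact not_le.mp hlt
          · have haH' : a ∈ H' := hsub' i₀ ha
            have haNG : a ∉ NG := Finset.disjoint_left.mp hi₀ ha
            have hlt : ¬ ((farC f w ε' g a : ℝ) ≤ r * w.length) := fun hle =>
              haNG (by rw [hNG, Finset.mem_filter]; exact ⟨haH', hle⟩)
            rw [hb]
            show r * (w.length : ℝ) < ((farC f w ε' a g : ℕ) : ℝ)
            rw [farC_comm]
            exact not_le.mp hlt
          · exact hsep' i₀ a ha b hb hab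
        · rw [Function.update_of_ne h]
          exact hsep' i
      · intro i
        rcases eq_or_ne i i₀ with h | h
        · rw [h, Function.update_self]
          exact Finset.insert_subset hgH ((hsub' i₀).trans (Finset.erase_subset g H))
        · rw [Function.update_of_ne h]
          exact (hsub' i).trans (Finset.erase_subset g H)
      · intro i j hij
        have hgp : ∀ l : Fin P, g ∉ parts' l := by
          intro l hmem
          exact absurd rfl (Finset.ne_of_mem_erase (hH' ▸ hsub' l hmem))
        rcases eq_or_ne i i₀ with hi | hi <;> rcases eq_or_ne j i₀ with hj | hj
        · exact absurd (hi.trans hj.symm) hij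
        · rw [hi, Function.update_self, Function.update_of_ne hj]
          rw [Finset.disjoint_left]
          intro a ha
          rcases Finset.mem_insert.mp ha with ha | ha
          · rw [ha]; exact hgp j
          · exact Finset.disjoint_left.mp (hdisj' i₀ j (Ne.symm hj)) ha
        · rw [hj, Function.update_self, Function.update_of_ne hi]
          rw [Finset.disjoint_right]
          intro a ha
          rcases Finset.mem_insert.mp ha with ha | ha
          · rw [ha]; exact hgp i
          · exact Finset.disjoint_right.mp (hdisj' i i₀ hi) ha
        · rw [Function.update_of_ne hi, Function.update_of_ne hj]
          exact hdisj' i j hij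
      · intro a haH
        rcases eq_or_ne a g with hag | hag
        · refine ⟨i₀, ?_⟩
          rw [Function.update_self]
          exact Finset.mem_insert.mpr (Or.inl hag)
        · have haH' : a ∈ H' := by rw [hH', Finset.mem_erase]; exact ⟨hag, haH⟩
          obtain ⟨i, hi⟩ := huni' a haH'
          rcases eq_or_ne i i₀ with h | h
          · refine ⟨i₀, ?_⟩
            rw [Function.update_self]
            exact Finset.mem_insert.mpr (Or.inr (h ▸ hi))
          · refine ⟨i, ?_⟩
            rw [Function.update_of_ne h]
            exact hi
end FSGAuxE
section FSGAuxF

open Filter Topology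

set_option linter.unusedSectionVars false
set_option maxHeartbeats 1000000

variable {X : Type*} {ι : Type*} [MetricSpace X] [CompactSpace X] [Fintype ι]
variable {f : ι → X → X} {φ : X → ℝ} {w : List ι} {ε ε' r M : ℝ}

theorem Qw_le_mul_Qws [Nonempty X]
    (hf : ∀ a, Continuous (f a)) (hM : ∀ x, |φ x| ≤ M)
    (hr : 0 < r) (hlen : 1 ≤ w.length) (hε : 0 < ε)
    (hε' : 0 < ε') (hε'2 : 2*ε' ≤ ε)
    (hmod : ∀ (a : ι) (u v : X), dist u v < ε' → dist (f a u) (f a v) < ε)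
    {P : ℕ} (hP : 0 < P)
    (hpack : ∀ A : Finset X, (∀ x ∈ A, ∀ y ∈ A, x ≠ y → ε ≤ dist x y) → A.card ≤ P) :
    Qw f φ w ε r ≤ (P : ℝ) * Qws f φ w ε' r := by
  classical
  letI : DecidableEq X := Classical.decEq X
  have hn1 : (1 : ℝ) ≤ (w.length : ℝ) := by exact_mod_cast hlen
  have hrn : 0 < r * (w.length : ℝ) := by nlinarith
  obtain ⟨K, hK⟩ := sep_card_bound (f := f) (w := w) hf hε
  set WS : Set ℕ := {k : ℕ | ∃ G : Finset X,
    (∀ x ∈ G, ∀ y ∈ G, x ≠ y → r * w.length ≤ (farC f w ε x y : ℝ)) ∧ G.card = k} with hWS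
  have h0 : 0 ∈ WS := ⟨∅, fun x hx => absurd hx (Finset.notMem_empty x), Finset.card_empty⟩
  have hbdd : BddAbove WS := by
    refine ⟨K, ?_⟩
    rintro k ⟨G, hG, rfl⟩
    refine hK G (fun x hx y hy hxy => exists_far_of_farC_pos ?_)
    have h1 := hG x hx y hy hxy
    have : (0:ℝ) < (farC f w ε x y : ℝ) := lt_of_lt_of_le hrn h1
    exact_mod_cast this
  have hmem : ∃ G : Finset X,
      (∀ x ∈ G, ∀ y ∈ G, x ≠ y → r * w.length ≤ (farC f w ε x y : ℝ)) ∧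
      G.card = sSup WS := Nat.sSup_mem ⟨0, h0⟩ hbdd
  obtain ⟨G, hG, hGcard⟩ := hmem
  have hmax : ∀ x ∉ G, ¬ (∀ a ∈ insert x G, ∀ b ∈ insert x G, a ≠ b →
      r * w.length ≤ (farC f w ε a b : ℝ)) := by
    intro x hx hcon
    have hmem2 : (insert x G).card ∈ WS := ⟨_, hcon, rfl⟩
    have hle := le_csSup hbdd hmem2
    rw [Finset.card_insert_of_notMem hx, hGcard] at hle
    omega
  have hspan : rSpan f w ε r G := by
    intro x
    by_cases hxG : x ∈ G
    · refine ⟨x, hxG, ?_⟩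
      have hfull : (Finset.range w.length).filter
          (fun i => dist (fw f (w.take i) x) (fw f (w.take i) x) < ε) =
          Finset.range w.length :=
        Finset.filter_true_of_mem (fun i _ => by rw [dist_self]; exact hε)
      rw [hfull, Finset.card_range]
      nlinarith
    · have hnc := hmax x hxG
      push_neg at hnc
      obtain ⟨a, ha, b, hb, hab, hfar⟩ := hnc
      rcases Finset.mem_insert.mp ha with rfl | haG
      · rcases Finset.mem_insert.mp hb with rfl | hbG
        · exact absurd rfl hab
        · refine ⟨b, hbG, ?_⟩
          have hc : (closeC f w ε a b : ℝ) + (farC f w ε a b : ℝ) = w.length := by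
            exact_mod_cast closeC_add_farC (f := f) (w := w) (ε := ε) a b
          show (1 - r) * (w.length:ℝ) < ((closeC f w ε a b : ℕ) : ℝ)
          nlinarith
      · rcases Finset.mem_insert.mp hb with rfl | hbG
        · refine ⟨a, haG, ?_⟩
          have hfar' : (farC f w ε b a : ℝ) < r * w.length := by
            rw [farC_comm]; exact hfar
          have hc : (closeC f w ε b a : ℝ) + (farC f w ε b a : ℝ) = w.length := by
            exact_mod_cast closeC_add_farC (f := f) (w := w) (ε := ε) b a
          show (1 - r) * (w.length:ℝ) < ((closeC f w ε b a : ℕ) : ℝ)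
          nlinarith
        · exact absurd (hG a haG b hbG hab) (not_le.mpr hfar)
  obtain ⟨parts, hsep, hsub, hdisj, hcover⟩ :=
    partition_lemma hr hlen hε' hε'2 hmod hP hpack hG G.card G (le_refl _) (subset_refl G)
  have hGuni : G = Finset.univ.biUnion parts := by
    ext a
    simp only [Finset.mem_biUnion, Finset.mem_univ, true_and]
    constructor
    · intro ha; exact hcover a ha
    · rintro ⟨i, hi⟩; exact hsub i hi
  have hsum : ∑ x ∈ G, Real.exp (Sw f φ w x) =
      ∑ i : Fin P, ∑ x ∈ parts i, Real.exp (Sw f φ w x) := by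
    rw [hGuni]
    exact Finset.sum_biUnion (fun i _ j _ hij => hdisj i j hij)
  calc Qw f φ w ε r ≤ ∑ x ∈ G, Real.exp (Sw f φ w x) := Qw_le_sum hspan
    _ = ∑ i : Fin P, ∑ x ∈ parts i, Real.exp (Sw f φ w x) := hsum
    _ ≤ ∑ _i : Fin P, Qws f φ w ε' r :=
        Finset.sum_le_sum (fun i _ => sum_le_Qws hf hM hε' (le_of_lt hr) (hsep i))
    _ = (P : ℝ) * Qws f φ w ε' r := by
        rw [Finset.sum_const, Finset.card_univ, Fintype.card_fin, nsmul_eq_mul]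

end FSGAuxF
section FSGAuxG

open Filter Topology

set_option linter.unusedSectionVars false
set_option maxHeartbeats 1000000

variable {X : Type*} {ι : Type*} [MetricSpace X] [CompactSpace X] [Fintype ι]
variable {f : ι → X → X} {φ : X → ℝ} {w : List ι} {ε r M : ℝ}

theorem Qws_le_exp_mul_Qw
    (hf : ∀ a, Continuous (f a)) (hM : ∀ x, |φ x| ≤ M) (hM0 : 0 ≤ M)
    {κ : ℝ} (hκ0 : 0 ≤ κ)
    (hκ : ∀ u v : X, dist u v < ε/2 → |φ u - φ v| ≤ κ)
    (hr : 0 < r) (hlen : 1 ≤ w.length) (hε : 0 < ε) :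
    Qws f φ w ε (2*r) ≤ Real.exp (w.length * (κ + 2*M*r)) * Qw f φ w (ε/2) r := by
  classical
  set n := w.length with hn
  have hn1 : (1 : ℝ) ≤ (n : ℝ) := by exact_mod_cast hlen
  set c : ℝ := n * (κ + 2*M*r) with hc
  apply csSup_le ⟨0, zero_mem_sepSums⟩
  rintro s ⟨E, hE, rfl⟩
  suffices h : (∑ x ∈ E, Real.exp (Sw f φ w x)) * Real.exp (-c) ≤ Qw f φ w (ε/2) r by
    have hpos := Real.exp_pos c
    have h2 : (∑ x ∈ E, Real.exp (Sw f φ w x)) * (Real.exp c)⁻¹ ≤ Qw f φ w (ε/2) r := by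
      rwa [Real.exp_neg] at h
    calc ∑ x ∈ E, Real.exp (Sw f φ w x)
        = Real.exp c * ((∑ x ∈ E, Real.exp (Sw f φ w x)) * (Real.exp c)⁻¹) := by
          field_simp
      _ ≤ Real.exp c * Qw f φ w (ε/2) r := by
          exact mul_le_mul_of_nonneg_left h2 hpos.le
  apply le_csInf (spanSums_nonempty hf hr hlen (half_pos hε))
  rintro t ⟨F, hF, rfl⟩
  suffices key : ∑ x ∈ E, Real.exp (Sw f φ w x) ≤
      Real.exp c * ∑ y ∈ F, Real.exp (Sw f φ w y) by
    have h3 := mul_le_mul_of_nonneg_right key (Real.exp_pos (-c)).le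
    calc (∑ x ∈ E, Real.exp (Sw f φ w x)) * Real.exp (-c)
        ≤ (Real.exp c * ∑ y ∈ F, Real.exp (Sw f φ w y)) * Real.exp (-c) := h3
      _ = ∑ y ∈ F, Real.exp (Sw f φ w y) := by
          rw [mul_comm (Real.exp c), mul_assoc, ← Real.exp_add]
          simp
  choose ψ hψF hψ using hF
  have hinj : Set.InjOn ψ E := by
    intro a ha b hb hab
    by_contra hne
    have hEab := hE a ha b hb hne
    set A : Finset ℕ := (Finset.range n).filter
      (fun i => dist (fw f (w.take i) a) (fw f (w.take i) (ψ a)) < ε/2) with hA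
    set B : Finset ℕ := (Finset.range n).filter
      (fun i => dist (fw f (w.take i) b) (fw f (w.take i) (ψ b)) < ε/2) with hB
    have hcardA : (1 - r) * (n:ℝ) < A.card := hψ a
    have hcardB : (1 - r) * (n:ℝ) < B.card := hψ b
    have hABsub : A ∩ B ⊆ (Finset.range n).filter
        (fun i => dist (fw f (w.take i) a) (fw f (w.take i) b) < ε) := by
      intro i hi
      rw [Finset.mem_inter, hA, hB, Finset.mem_filter, Finset.mem_filter] at hi
      obtain ⟨⟨hir, hia⟩, -, hib⟩ := hi
      rw [Finset.mem_filter]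
      refine ⟨hir, ?_⟩
      calc dist (fw f (w.take i) a) (fw f (w.take i) b)
          ≤ dist (fw f (w.take i) a) (fw f (w.take i) (ψ a))
            + dist (fw f (w.take i) (ψ a)) (fw f (w.take i) b) := dist_triangle _ _ _
        _ < ε/2 + ε/2 := by
            refine add_lt_add hia ?_
            rw [hab, dist_comm]
            exact hib
        _ = ε := add_halves ε
    have hinter : A.card + B.card ≤ (A ∩ B).card + n := by
      have h4 := Finset.card_inter_add_card_union A B
      have h5 : (A ∪ B).card ≤ n := by
        have : A ∪ B ⊆ Finset.range n := by
          intro i hi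
          rcases Finset.mem_union.mp hi with h | h
          · exact Finset.filter_subset _ _ (hA ▸ h)
          · exact Finset.filter_subset _ _ (hB ▸ h)
        have := Finset.card_le_card this
        rwa [Finset.card_range] at this
      omega
    have hclose : ((A ∩ B).card : ℝ) ≤ (closeC f w ε a b : ℝ) := by
      exact_mod_cast Finset.card_le_card hABsub
    have hcf : (closeC f w ε a b : ℝ) + (farC f w ε a b : ℝ) = n := by
      exact_mod_cast closeC_add_farC (f := f) (w := w) (ε := ε) a b
    have hEab' : 2*r * (n:ℝ) < (farC f w ε a b : ℝ) := hEab
    have hinter' : (A.card : ℝ) + B.card ≤ ((A ∩ B).card : ℝ) + n := by exact_mod_cast hinter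
    linarith
  have hpt : ∀ a ∈ E, Real.exp (Sw f φ w a) ≤ Real.exp c * Real.exp (Sw f φ w (ψ a)) := by
    intro a ha
    rw [← Real.exp_add]
    apply Real.exp_le_exp.mpr
    have hdiff : Sw f φ w a - Sw f φ w (ψ a) ≤ c := by
      rw [Sw, Sw, ← Finset.sum_sub_distrib]
      set p : ℕ → Prop := fun i =>
        dist (fw f (w.take i) a) (fw f (w.take i) (ψ a)) < ε/2 with hp
      rw [← Finset.sum_filter_add_sum_filter_not (Finset.range w.length) p]
      have hcards := Finset.card_filter_add_card_filter_not
        (s := Finset.range w.length) (p := p)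
      rw [Finset.card_range] at hcards
      have hclose' : (1 - r) * (n:ℝ) <
          (((Finset.range w.length).filter p).card : ℝ) := hψ a
      have hfarlt : ((((Finset.range w.length).filter (fun i => ¬ p i)).card : ℝ)) <
          r * n := by
        have : (((Finset.range w.length).filter p).card : ℝ) +
            (((Finset.range w.length).filter (fun i => ¬ p i)).card : ℝ) = n := by
          exact_mod_cast hcards
        linarith
      have h1 : ∑ i ∈ (Finset.range w.length).filter p,
          (φ (fw f (w.take i) a) - φ (fw f (w.take i) (ψ a))) ≤ n * κ := by
        calc ∑ i ∈ (Finset.range w.length).filter p,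
            (φ (fw f (w.take i) a) - φ (fw f (w.take i) (ψ a)))
            ≤ ((Finset.range w.length).filter p).card • κ := by
              apply Finset.sum_le_card_nsmul
              intro i hi
              rw [Finset.mem_filter] at hi
              exact (le_abs_self _).trans (hκ _ _ hi.2)
          _ = (((Finset.range w.length).filter p).card : ℝ) * κ := nsmul_eq_mul _ _
          _ ≤ n * κ := by
              apply mul_le_mul_of_nonneg_right _ hκ0
              have : ((Finset.range w.length).filter p).card ≤ n := by omega
              exact_mod_cast this
      have h2 : ∑ i ∈ (Finset.range w.length).filter (fun i => ¬ p i),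
          (φ (fw f (w.take i) a) - φ (fw f (w.take i) (ψ a))) ≤ r * n * (2*M) := by
        calc ∑ i ∈ (Finset.range w.length).filter (fun i => ¬ p i),
            (φ (fw f (w.take i) a) - φ (fw f (w.take i) (ψ a)))
            ≤ ((Finset.range w.length).filter (fun i => ¬ p i)).card • (2*M) := by
              apply Finset.sum_le_card_nsmul
              intro i _
              have ha' := abs_le.mp (hM (fw f (w.take i) a))
              have hb' := abs_le.mp (hM (fw f (w.take i) (ψ a)))
              linarith
          _ = ((((Finset.range w.length).filter (fun i => ¬ p i)).card : ℝ)) * (2*M) :=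
              nsmul_eq_mul _ _
          _ ≤ r * n * (2*M) := by
              apply mul_le_mul_of_nonneg_right hfarlt.le
              linarith
      rw [hc]
      have : (n:ℝ) * (κ + 2*M*r) = n * κ + r * n * (2*M) := by ring
      rw [this]
      exact add_le_add h1 h2
    linarith
  calc ∑ x ∈ E, Real.exp (Sw f φ w x)
      ≤ ∑ a ∈ E, Real.exp c * Real.exp (Sw f φ w (ψ a)) := Finset.sum_le_sum hpt
    _ = Real.exp c * ∑ a ∈ E, Real.exp (Sw f φ w (ψ a)) := by rw [Finset.mul_sum]
    _ ≤ Real.exp c * ∑ y ∈ F, Real.exp (Sw f φ w y) := by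
        apply mul_le_mul_of_nonneg_left _ (Real.exp_pos c).le
        calc ∑ a ∈ E, Real.exp (Sw f φ w (ψ a))
            = ∑ y ∈ E.image ψ, Real.exp (Sw f φ w y) := by
              rw [Finset.sum_image (fun a ha b hb h => hinj ha hb h)]
          _ ≤ ∑ y ∈ F, Real.exp (Sw f φ w y) := by
              apply Finset.sum_le_sum_of_subset_of_nonneg
              · exact Finset.image_subset_iff.mpr (fun a _ => hψF a)
              · intro y _ _
                exact (Real.exp_pos _).le

end FSGAuxG
section FSGAuxH

open Filter Topology

set_option linter.unusedSectionVars false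
set_option maxHeartbeats 1000000

variable {X : Type*} {ι : Type*} [MetricSpace X] [CompactSpace X] [Fintype ι]
variable {f : ι → X → X} {φ : X → ℝ} {ε ε' r M : ℝ} {n : ℕ}

theorem Qn_le_mul_Qns [Nonempty X]
    (hf : ∀ a, Continuous (f a)) (hM : ∀ x, |φ x| ≤ M)
    (hr : 0 < r) (hn : 1 ≤ n) (hε : 0 < ε)
    (hε' : 0 < ε') (hε'2 : 2*ε' ≤ ε)
    (hmod : ∀ (a : ι) (u v : X), dist u v < ε' → dist (f a u) (f a v) < ε)
    {P : ℕ} (hP : 0 < P)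
    (hpack : ∀ A : Finset X, (∀ x ∈ A, ∀ y ∈ A, x ≠ y → ε ≤ dist x y) → A.card ≤ P) :
    Qn f φ n ε r ≤ (P : ℝ) * Qns f φ n ε' r := by
  rw [Qn, Qns]
  rw [mul_left_comm]
  apply mul_le_mul_of_nonneg_left _ (by positivity)
  rw [Finset.mul_sum]
  apply Finset.sum_le_sum
  intro σ _
  have hlen : 1 ≤ (List.ofFn σ).length := by rw [List.length_ofFn]; exact hn
  exact Qw_le_mul_Qws hf hM hr hlen hε hε' hε'2 hmod hP hpack

theorem Qns_le_exp_mul_Qn_s2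
    (hf : ∀ a, Continuous (f a)) (hM : ∀ x, |φ x| ≤ M) (hM0 : 0 ≤ M)
    {κ : ℝ} (hκ0 : 0 ≤ κ)
    (hκ : ∀ u v : X, dist u v < ε/2 → |φ u - φ v| ≤ κ)
    (hr : 0 < r) (hn : 1 ≤ n) (hε : 0 < ε) :
    Qns f φ n ε (2*r) ≤ Real.exp (n * (κ + 2*M*r)) * Qn f φ n (ε/2) r := by
  rw [Qn, Qns]
  rw [mul_left_comm]
  apply mul_le_mul_of_nonneg_left _ (by positivity)
  rw [Finset.mul_sum]
  apply Finset.sum_le_sum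
  intro σ _
  have hlen : 1 ≤ (List.ofFn σ).length := by rw [List.length_ofFn]; exact hn
  have := Qws_le_exp_mul_Qw (f := f) (w := List.ofFn σ) hf hM hM0 hκ0 hκ hr hlen hε
  rwa [List.length_ofFn] at this

theorem Qn_pos [Nonempty X] (hcard : 0 < Fintype.card ι)
    (hf : ∀ a, Continuous (f a)) (hM : ∀ x, |φ x| ≤ M)
    (hr : 0 < r) (hn : 1 ≤ n) (hε : 0 < ε) :
    0 < Qn f φ n ε r := by
  have hι : Nonempty ι := Fintype.card_pos_iff.mp hcard
  rw [Qn]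
  apply mul_pos
  · apply div_pos one_pos
    apply pow_pos
    exact_mod_cast hcard
  · apply Finset.sum_pos
    · intro σ _
      have hlen : 1 ≤ (List.ofFn σ).length := by rw [List.length_ofFn]; exact hn
      exact Qw_pos hf hM hr hlen hε
    · exact ⟨fun _ => Classical.arbitrary ι, Finset.mem_univ _⟩

theorem Qns_pos [Nonempty X] (hcard : 0 < Fintype.card ι)
    (hf : ∀ a, Continuous (f a)) (hM : ∀ x, |φ x| ≤ M)
    (hr : 0 ≤ r) (hn : 1 ≤ n) (hε : 0 < ε) :
    0 < Qns f φ n ε r := by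
  have hι : Nonempty ι := Fintype.card_pos_iff.mp hcard
  rw [Qns]
  apply mul_pos
  · apply div_pos one_pos
    apply pow_pos
    exact_mod_cast hcard
  · apply Finset.sum_pos
    · intro σ _
      exact Qws_pos hf hM hε hr
    · exact ⟨fun _ => Classical.arbitrary ι, Finset.mem_univ _⟩

theorem Qns_anti (hf : ∀ a, Continuous (f a)) (hM : ∀ x, |φ x| ≤ M) {ε₁ ε₂ : ℝ}
    (hε₁ : 0 < ε₁) (h12 : ε₁ ≤ ε₂) (hr : 0 ≤ r) :
    Qns f φ n ε₂ r ≤ Qns f φ n ε₁ r := by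
  rw [Qns, Qns]
  apply mul_le_mul_of_nonneg_left _ (by positivity)
  apply Finset.sum_le_sum
  intro σ _
  exact Qws_anti hf hM hε₁ h12 hr

end FSGAuxH

section FSGAuxI

open Filter Topology

theorem ereal_limsup_mono {u v : ℕ → ℝ} (h : ∀ᶠ n in atTop, u n ≤ v n) :
    atTop.limsup (fun n => ((u n : ℝ) : EReal)) ≤
      atTop.limsup (fun n => ((v n : ℝ) : EReal)) :=
  Filter.limsup_le_limsup (h.mono fun n hn => EReal.coe_le_coe_iff.mpr hn)

theorem ereal_limsup_const_add (c : ℝ) (v : ℕ → ℝ) :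
    atTop.limsup (fun n => ((c + v n : ℝ) : EReal)) ≤
      (c : EReal) + atTop.limsup (fun n => ((v n : ℝ) : EReal)) := by
  have h1 : atTop.limsup (fun _ : ℕ => (c : EReal)) = (c : EReal) := Filter.limsup_const _
  have h := EReal.limsup_add_le (f := (atTop : Filter ℕ))
    (u := fun _ : ℕ => (c : EReal)) (v := fun n => ((v n : ℝ) : EReal))
    (by rw [h1]; exact Or.inl (EReal.coe_ne_bot c))
    (by rw [h1]; exact Or.inl (EReal.coe_ne_top c))
  rw [h1] at h
  refine le_trans (le_of_eq ?_) h
  apply Filter.limsup_congr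
  filter_upwards with n
  rw [Pi.add_apply, EReal.coe_add]

theorem ereal_le_of_forall_pos_le_add {a b : EReal}
    (h : ∀ κ : ℝ, 0 < κ → a ≤ (κ : EReal) + b) : a ≤ b := by
  induction b with
  | bot =>
    have := h 1 one_pos
    rwa [EReal.add_bot] at this
  | coe x =>
    have hne : a ≠ ⊤ := by
      intro hat
      have := h 1 one_pos
      rw [hat, ← EReal.coe_add] at this
      exact EReal.coe_ne_top (1+x) (top_le_iff.mp this)
    induction a with
    | bot => exact bot_le
    | coe y =>
      have : ∀ κ : ℝ, 0 < κ → y ≤ κ + x := by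
        intro κ hκ
        have := h κ hκ
        rw [← EReal.coe_add] at this
        exact_mod_cast this
      apply EReal.coe_le_coe_iff.mpr
      by_contra hyx
      push_neg at hyx
      have := this ((y - x)/2) (by linarith)
      linarith
    | top => exact absurd rfl hne
  | top => exact le_top

end FSGAuxI
section FSGAuxJ

open Filter Topology

set_option linter.unusedSectionVars false
set_option maxHeartbeats 1000000

variable {X : Type*} {ι : Type*} [MetricSpace X] [CompactSpace X] [Fintype ι]
variable {f : ι → X → X} {φ : X → ℝ} {M : ℝ}

theorem Pse_anti [Nonempty X] (hcard : 0 < Fintype.card ι)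
    (hf : ∀ a, Continuous (f a)) (hM : ∀ x, |φ x| ≤ M) {ε₁ ε₂ ρ : ℝ}
    (hε₁ : 0 < ε₁) (h12 : ε₁ ≤ ε₂) (hρ : 0 ≤ ρ) :
    Pse f φ ε₂ ρ ≤ Pse f φ ε₁ ρ := by
  rw [Pse, Pse]
  apply ereal_limsup_mono
  filter_upwards [eventually_ge_atTop 1] with n hn
  apply mul_le_mul_of_nonneg_left _ (by positivity)
  exact Real.log_le_log (Qns_pos hcard hf hM hρ hn (lt_of_lt_of_le hε₁ h12))
    (Qns_anti hf hM hε₁ h12 hρ)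

end FSGAuxJ
theorem Ps_sub_le_Pr_le_Ps
    {X : Type*} [MetricSpace X] [CompactSpace X] {m : ℕ}
    (f : Fin m → X → X) (hf : ∀ i, Continuous (f i))
    (φ : X → ℝ) (hφ : Continuous φ)
    (M r : ℝ) (hr0 : 0 < r) (hr2 : r < 1 / 2)
    (hM : IsGreatest (Set.range fun x => |φ x|) M) :
    Ps f φ (2 * r) - ((2 * M * r : ℝ) : EReal) ≤ Pr f φ r ∧
      Pr f φ r ≤ Ps f φ r := by
  classical
  obtain ⟨x₀, hx₀⟩ := hM.1
  have hub : ∀ x, |φ x| ≤ M := fun x => hM.2 ⟨x, rfl⟩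
  have hM0 : 0 ≤ M := hx₀ ▸ abs_nonneg (φ x₀)
  have hXne : Nonempty X := ⟨x₀⟩
  rcases Nat.eq_zero_or_pos m with hm | hm
  · -- degenerate case `m = 0`
    subst hm
    have h0 : ∀ n : ℕ, 1 ≤ n → ((Fintype.card (Fin 0) : ℝ)) ^ n = 0 := by
      intro n hn
      rw [Fintype.card_fin, Nat.cast_zero]
      exact zero_pow (by omega)
    have hQn : ∀ (n : ℕ) (ε ρ : ℝ), 1 ≤ n → Qn f φ n ε ρ = 0 := by
      intro n ε ρ hn
      rw [Qn, h0 n hn, div_zero, zero_mul]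
    have hQns : ∀ (n : ℕ) (ε ρ : ℝ), 1 ≤ n → Qns f φ n ε ρ = 0 := by
      intro n ε ρ hn
      rw [Qns, h0 n hn, div_zero, zero_mul]
    have hL : ∀ ε ρ : ℝ, atTop.limsup
        (fun n : ℕ => (((n : ℝ)⁻¹ * Real.log (Qn f φ n ε ρ) : ℝ) : EReal)) = (0 : EReal) := by
      intro ε ρ
      have heq : (fun n : ℕ => (((n : ℝ)⁻¹ * Real.log (Qn f φ n ε ρ) : ℝ) : EReal))
          =ᶠ[atTop] (fun _ => ((0:ℝ) : EReal)) := by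
        filter_upwards [eventually_ge_atTop 1] with n hn
        rw [hQn n ε ρ hn, Real.log_zero, mul_zero]
      rw [Filter.limsup_congr heq, Filter.limsup_const, EReal.coe_zero]
    have hLs : ∀ ε ρ : ℝ, Pse f φ ε ρ = (0 : EReal) := by
      intro ε ρ
      rw [Pse]
      have heq : (fun n : ℕ => (((n : ℝ)⁻¹ * Real.log (Qns f φ n ε ρ) : ℝ) : EReal))
          =ᶠ[atTop] (fun _ => ((0:ℝ) : EReal)) := by
        filter_upwards [eventually_ge_atTop 1] with n hn
        rw [hQns n ε ρ hn, Real.log_zero, mul_zero]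
      rw [Filter.limsup_congr heq, Filter.limsup_const, EReal.coe_zero]
    have hPr : Pr f φ r = 0 := by
      rw [Pr]
      apply le_antisymm
      · exact iSup₂_le (fun ε _ => le_of_eq (hL ε r))
      · have h1 := le_iSup₂ (f := fun (ε : ℝ) (_ : ε ∈ Set.Ioi (0:ℝ)) =>
          atTop.limsup (fun n : ℕ =>
            (((n : ℝ)⁻¹ * Real.log (Qn f φ n ε r) : ℝ) : EReal)))
          1 (Set.mem_Ioi.mpr one_pos)
        rw [hL 1 r] at h1
        exact h1
    have hPs : ∀ ρ : ℝ, Ps f φ ρ = 0 := by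
      intro ρ
      rw [Ps]
      apply le_antisymm
      · exact iSup₂_le (fun ε _ => le_of_eq (hLs ε ρ))
      · have h1 := le_iSup₂ (f := fun (ε : ℝ) (_ : ε ∈ Set.Ioi (0:ℝ)) => Pse f φ ε ρ)
          1 (Set.mem_Ioi.mpr one_pos)
        rw [hLs 1 ρ] at h1
        exact h1
    constructor
    · rw [hPs (2*r), hPr]
      have hcoe : (0:EReal) - ((2*M*r : ℝ) : EReal) = (((0 - 2*M*r) : ℝ) : EReal) := by
        rw [← EReal.coe_zero, ← EReal.coe_sub]
      rw [hcoe, ← EReal.coe_zero, EReal.coe_le_coe_iff]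
      nlinarith
    · rw [hPr, hPs r]
  · -- main case `1 ≤ m`
    have hcard : 0 < Fintype.card (Fin m) := by simpa using hm
    constructor
    · -- `Ps (2r) - 2Mr ≤ Pr r`
      have key : ∀ κ : ℝ, 0 < κ →
          Ps f φ (2*r) ≤ (κ : EReal) + (((2*M*r : ℝ) : EReal) + Pr f φ r) := by
        intro κ hκ
        obtain ⟨η₀, hη₀, hηκ⟩ : ∃ η₀ : ℝ, 0 < η₀ ∧
            ∀ u v : X, dist u v < η₀ → |φ u - φ v| ≤ κ := by
          obtain ⟨δ, hδ, hd⟩ := Metric.uniformContinuous_iff.mp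
            (CompactSpace.uniformContinuous_of_continuous hφ) κ hκ
          refine ⟨δ, hδ, fun u v huv => ?_⟩
          have := hd huv
          rw [Real.dist_eq] at this
          exact this.le
        rw [Ps]
        apply iSup₂_le
        intro ε hε
        have hεpos : (0:ℝ) < ε := hε
        set ε₁ := min ε η₀ with hε₁def
        have hε₁ : 0 < ε₁ := lt_min hεpos hη₀
        have hκ1 : ∀ u v : X, dist u v < ε₁/2 → |φ u - φ v| ≤ κ := by
          intro u v h
          apply hηκ
          have h1 : ε₁ ≤ η₀ := min_le_right _ _
          linarith
        have step1 : Pse f φ ε (2*r) ≤ Pse f φ ε₁ (2*r) :=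
          Pse_anti hcard hf hub hε₁ (min_le_left _ _) (by linarith)
        have step2 : Pse f φ ε₁ (2*r) ≤ ((κ + 2*M*r : ℝ) : EReal) +
            atTop.limsup (fun n : ℕ =>
              (((n:ℝ)⁻¹ * Real.log (Qn f φ n (ε₁/2) r) : ℝ) : EReal)) := by
          rw [Pse]
          refine le_trans (ereal_limsup_mono ?_) (ereal_limsup_const_add _ _)
          filter_upwards [eventually_ge_atTop 1] with n hn
          have hQns_pos : 0 < Qns f φ n ε₁ (2*r) :=
            Qns_pos hcard hf hub (by linarith) hn hε₁
          have hQn_pos : 0 < Qn f φ n (ε₁/2) r :=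
            Qn_pos hcard hf hub hr0 hn (half_pos hε₁)
          have hle := Qns_le_exp_mul_Qn_s2 (f := f) hf hub hM0 hκ.le hκ1 hr0 hn hε₁
          have hlog := Real.log_le_log hQns_pos hle
          rw [Real.log_mul (Real.exp_ne_zero _) (ne_of_gt hQn_pos), Real.log_exp] at hlog
          have hninv : (0:ℝ) ≤ (n:ℝ)⁻¹ := by positivity
          have hres := mul_le_mul_of_nonneg_left hlog hninv
          rw [mul_add, ← mul_assoc] at hres
          have hne : (n:ℝ) ≠ 0 := by
            have : (1:ℝ) ≤ (n:ℝ) := by exact_mod_cast hn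
            linarith
          rw [inv_mul_cancel₀ hne, one_mul] at hres
          exact hres
        have step3 : atTop.limsup (fun n : ℕ =>
            (((n:ℝ)⁻¹ * Real.log (Qn f φ n (ε₁/2) r) : ℝ) : EReal)) ≤ Pr f φ r := by
          rw [Pr]
          exact le_iSup₂ (f := fun (ε : ℝ) (_ : ε ∈ Set.Ioi (0:ℝ)) =>
            atTop.limsup (fun n : ℕ =>
              (((n:ℝ)⁻¹ * Real.log (Qn f φ n ε r) : ℝ) : EReal)))
            (ε₁/2) (Set.mem_Ioi.mpr (half_pos hε₁))
        calc Pse f φ ε (2*r) ≤ Pse f φ ε₁ (2*r) := step1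
          _ ≤ ((κ + 2*M*r : ℝ) : EReal) + _ := step2
          _ ≤ ((κ + 2*M*r : ℝ) : EReal) + Pr f φ r := add_le_add_right step3 _
          _ = (κ : EReal) + (((2*M*r : ℝ) : EReal) + Pr f φ r) := by
              rw [EReal.coe_add, add_assoc]
      have h2 := ereal_le_of_forall_pos_le_add key
      apply EReal.sub_le_of_le_add
      rwa [add_comm] at h2
    · -- `Pr r ≤ Ps r`
      rw [Pr]
      apply iSup₂_le
      intro ε hε
      have hεpos : (0:ℝ) < ε := hε
      obtain ⟨δ, hδ, hδε, hmodδ⟩ := exists_mod (f := f) hf hεpos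
      set ε' := min δ (ε/2) with hε'def
      have hε'pos : 0 < ε' := lt_min hδ (half_pos hεpos)
      have hε'2 : 2*ε' ≤ ε := by
        have h1 : ε' ≤ ε/2 := min_le_right δ (ε/2)
        linarith
      have hmod : ∀ (a : Fin m) (u v : X), dist u v < ε' → dist (f a u) (f a v) < ε :=
        fun a u v h => hmodδ a u v (lt_of_lt_of_le h (min_le_left _ _))
      obtain ⟨P, hP, hpack⟩ := exists_pack (X := X) hεpos
      apply ereal_le_of_forall_pos_le_add
      intro κ hκ
      have hev : ∀ᶠ n : ℕ in atTop, (n:ℝ)⁻¹ * Real.log (Qn f φ n ε r) ≤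
          κ + (n:ℝ)⁻¹ * Real.log (Qns f φ n ε' r) := by
        filter_upwards [eventually_ge_atTop (⌈Real.log P / κ⌉₊ + 1)] with n hn
        have hn1 : 1 ≤ n := le_trans (by omega) hn
        have hnR : (0:ℝ) < (n:ℝ) := by exact_mod_cast hn1
        have hQn_pos : 0 < Qn f φ n ε r := Qn_pos hcard hf hub hr0 hn1 hεpos
        have hQns_pos : 0 < Qns f φ n ε' r := Qns_pos hcard hf hub hr0.le hn1 hε'pos
        have hle := Qn_le_mul_Qns (f := f) hf hub hr0 hn1 hεpos hε'pos hε'2 hmod hP hpack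
        have hlog := Real.log_le_log hQn_pos hle
        have hPne : ((P:ℝ)) ≠ 0 := by positivity
        rw [Real.log_mul hPne (ne_of_gt hQns_pos)] at hlog
        have hkey : (n:ℝ)⁻¹ * Real.log P ≤ κ := by
          have hceil : Real.log ↑P / κ ≤ (n:ℝ) := by
            calc Real.log ↑P / κ ≤ (⌈Real.log ↑P / κ⌉₊ : ℝ) := Nat.le_ceil _
              _ ≤ (n:ℝ) := by exact_mod_cast le_trans (by omega) hn
          rw [div_le_iff₀ hκ] at hceil
          rw [inv_mul_eq_div, div_le_iff₀ hnR]
          linarith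
        have hres := mul_le_mul_of_nonneg_left hlog (by positivity : (0:ℝ) ≤ (n:ℝ)⁻¹)
        rw [mul_add] at hres
        linarith
      calc atTop.limsup (fun n : ℕ =>
            (((n:ℝ)⁻¹ * Real.log (Qn f φ n ε r) : ℝ) : EReal))
          ≤ atTop.limsup (fun n : ℕ =>
            (((κ + (n:ℝ)⁻¹ * Real.log (Qns f φ n ε' r)) : ℝ) : EReal)) :=
            ereal_limsup_mono hev
        _ ≤ (κ : EReal) + Pse f φ ε' r := by
            rw [Pse]
            exact ereal_limsup_const_add κ _
        _ ≤ (κ : EReal) + Ps f φ r := by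
            apply add_le_add_right
            rw [Ps]
            exact le_iSup₂ (f := fun (ε : ℝ) (_ : ε ∈ Set.Ioi (0:ℝ)) => Pse f φ ε r)
              ε' (Set.mem_Ioi.mpr hε'pos)
end
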